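/- Minimax optimal strategy (Theorem 2.2, strategy part): if σ* ∈ ℝᵖ with σ* ≥ 0 attains the minimum of the slack function γ over {σ ≥ 0}, then the prediction vector g(σ*) is a minimax optimal strategy: sup over z ∈ Z of ℓ(z, g(σ*)) = (1/2)·γ(σ*) = V, where V = min over g ∈ [−1,1]ⁿ of sup over z ∈ Z of ℓ(z,g). -/

import Mathlib

open scoped BigOperators

noncomputable def Psi (lp lm Γinv : ℝ → ℝ) (m : ℝ) : ℝ :=
  if m ≤ lm (-1) - lp (-1) then -m + 2 * lm (-1)
  else if m < lm 1 - lp 1 then lp (Γinv m) + lm (Γinv m)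
  else m + 2 * lp 1

noncomputable def lossV (lp lm : ℝ → ℝ) (n : ℕ) (z g : Fin n → ℝ) : ℝ :=
  (1 / (n : ℝ)) * ∑ j, ((1 + z j) / 2 * lp (g j) + (1 - z j) / 2 * lm (g j))

def ZSet (p n : ℕ) (F : Fin p → Fin n → ℝ) (b : Fin p → ℝ) : Set (Fin n → ℝ) :=
  {z | (∀ j, z j ∈ Set.Icc (-1:ℝ) 1) ∧ ∀ i, b i ≤ (1 / (n : ℝ)) * ∑ j, F i j * z j}

noncomputable def slack (lp lm Γinv : ℝ → ℝ) (p n : ℕ) (F : Fin p → Fin n → ℝ)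
    (b : Fin p → ℝ) (σ : Fin p → ℝ) : ℝ :=
  -(∑ i, b i * σ i) + (1 / (n : ℝ)) * ∑ j, Psi lp lm Γinv (∑ i, σ i * F i j)

noncomputable def gpred (lp lm Γinv : ℝ → ℝ) (p n : ℕ) (F : Fin p → Fin n → ℝ)
    (σ : Fin p → ℝ) (j : Fin n) : ℝ :=
  if (∑ i, σ i * F i j) ≤ lm (-1) - lp (-1) then -1
  else if (∑ i, σ i * F i j) < lm 1 - lp 1 then Γinv (∑ i, σ i * F i j)
  else 1

lemma swap_sum (p n : ℕ) (F : Fin p → Fin n → ℝ) (τ : Fin p → ℝ) (z : Fin n → ℝ) :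
    ∑ i, τ i * ∑ j, F i j * z j = ∑ j, z j * ∑ i, τ i * F i j := by
  simp_rw [Finset.mul_sum]
  rw [Finset.sum_comm]
  exact Finset.sum_congr rfl fun j _ => Finset.sum_congr rfl fun i _ => by ring


lemma star_ineq (lp lm Γinv : ℝ → ℝ)
    (hlpm : AntitoneOn lp (Set.Icc (-1) 1))
    (hlmm : MonotoneOn lm (Set.Icc (-1) 1))
    (hGinvMem : ∀ m ∈ Set.Icc (lm (-1) - lp (-1)) (lm 1 - lp 1), Γinv m ∈ Set.Icc (-1:ℝ) 1)
    (hGinvRight : ∀ m ∈ Set.Icc (lm (-1) - lp (-1)) (lm 1 - lp 1), lm (Γinv m) - lp (Γinv m) = m)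
    (hGinvLeft : ∀ g ∈ Set.Icc (-1:ℝ) 1, Γinv (lm g - lp g) = g)
    (g : ℝ) (hg : g ∈ Set.Icc (-1:ℝ) 1) (m : ℝ) :
    Psi lp lm Γinv m ≤ lp g + lm g + |m - (lm g - lp g)| := by
  have hg1 : (-1:ℝ) ≤ g := hg.1
  have hg2 : g ≤ 1 := hg.2
  have hmem1 : (-1:ℝ) ∈ Set.Icc (-1:ℝ) 1 := by constructor <;> norm_num
  have hmem2 : (1:ℝ) ∈ Set.Icc (-1:ℝ) 1 := by constructor <;> norm_num
  unfold Psi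
  split_ifs with h1 h2
  · have hlm : lm (-1) ≤ lm g := hlmm hmem1 hg hg1
    have habs : (lm g - lp g) - m ≤ |m - (lm g - lp g)| := by
      rw [abs_sub_comm]; exact le_abs_self _
    linarith
  · push_neg at h1
    have hmm : m ∈ Set.Icc (lm (-1) - lp (-1)) (lm 1 - lp 1) := ⟨le_of_lt h1, le_of_lt h2⟩
    have hG : Γinv m ∈ Set.Icc (-1:ℝ) 1 := hGinvMem m hmm
    have hGe : lm (Γinv m) - lp (Γinv m) = m := hGinvRight m hmm
    rcases le_total (lm g - lp g) m with hc | hc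
    · have hgG : g ≤ Γinv m := by
        by_contra hlt
        push_neg at hlt
        have h3 : lm (Γinv m) ≤ lm g := hlmm hG hg (le_of_lt hlt)
        have h4 : lp g ≤ lp (Γinv m) := hlpm hG hg (le_of_lt hlt)
        have he : lm g - lp g = m := le_antisymm hc (by linarith)
        have he2 : Γinv m = g := by rw [← he, hGinvLeft g hg]
        rw [he2] at hlt
        exact lt_irrefl g hlt
      have h5 : lp (Γinv m) ≤ lp g := hlpm hg hG hgG
      have habs : m - (lm g - lp g) ≤ |m - (lm g - lp g)| := le_abs_self _
      linarith
    · have hgG : Γinv m ≤ g := by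
        by_contra hlt
        push_neg at hlt
        have h3 : lm g ≤ lm (Γinv m) := hlmm hg hG (le_of_lt hlt)
        have h4 : lp (Γinv m) ≤ lp g := hlpm hg hG (le_of_lt hlt)
        have he : lm g - lp g = m := le_antisymm (by linarith) hc
        have he2 : Γinv m = g := by rw [← he, hGinvLeft g hg]
        rw [he2] at hlt
        exact lt_irrefl g hlt
      have h5 : lm (Γinv m) ≤ lm g := hlmm hG hg hgG
      have habs : (lm g - lp g) - m ≤ |m - (lm g - lp g)| := by
        rw [abs_sub_comm]; exact le_abs_self _
      linarith
  · push_neg at h2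
    have hlp : lp 1 ≤ lp g := hlpm hg hmem2 hg2
    have habs : m - (lm g - lp g) ≤ |m - (lm g - lp g)| := le_abs_self _
    linarith

lemma ptUB (lp lm Γinv : ℝ → ℝ)
    (hGinvRight : ∀ m ∈ Set.Icc (lm (-1) - lp (-1)) (lm 1 - lp 1), lm (Γinv m) - lp (Γinv m) = m)
    (z m : ℝ) (hz1 : -1 ≤ z) (hz2 : z ≤ 1) (G : ℝ)
    (hG : G = if m ≤ lm (-1) - lp (-1) then (-1:ℝ) else if m < lm 1 - lp 1 then Γinv m else 1) :
    (1 + z) / 2 * lp G + (1 - z) / 2 * lm G ≤ (Psi lp lm Γinv m - z * m) / 2 := by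
  subst hG
  unfold Psi
  split_ifs with h1 h2
  · nlinarith [mul_nonneg (by linarith : (0:ℝ) ≤ 1 + z)
      (by linarith : (0:ℝ) ≤ lm (-1) - lp (-1) - m)]
  · have hGe : lm (Γinv m) - lp (Γinv m) = m :=
      hGinvRight m ⟨le_of_lt (not_le.mp h1), le_of_lt h2⟩
    nlinarith [hGe]
  · nlinarith [mul_nonneg (by linarith : (0:ℝ) ≤ 1 - z)
      (by linarith [not_lt.mp h2] : (0:ℝ) ≤ m - (lm 1 - lp 1))]

lemma dualityLemma (p n : ℕ) (F : Fin p → Fin n → ℝ) (b : Fin p → ℝ)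
    (hZ : (ZSet p n F b).Nonempty) (c : Fin n → ℝ) (W : ℝ)
    (h : ∀ τ : Fin p → ℝ, (∀ i, 0 ≤ τ i) →
      W ≤ -(∑ i, b i * τ i) + (1 / (n : ℝ)) * ∑ j, |(∑ i, τ i * F i j) - c j|) :
    ∃ z ∈ ZSet p n F b, W ≤ -((1 / (n : ℝ)) * ∑ j, z j * c j) := by
  classical
  by_contra hcon
  push_neg at hcon
  obtain ⟨z₀, hz₀⟩ := hZ
  set K : Set (Fin n → ℝ) := Set.univ.pi (fun _ => Set.Icc (-1:ℝ) 1) with hK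
  have hKmem : ∀ z : Fin n → ℝ, z ∈ K ↔ ∀ j, z j ∈ Set.Icc (-1:ℝ) 1 := by
    intro z; rw [hK, Set.mem_univ_pi]
  have hKcomp : IsCompact K := isCompact_univ_pi fun _ => isCompact_Icc
  have hKconv : Convex ℝ K := convex_pi fun _ _ => convex_Icc _ _
  set φ : (Fin n → ℝ) → (Fin p → ℝ) × ℝ :=
    fun z => (fun i => (1 / (n : ℝ)) * ∑ j, F i j * z j - b i,
              -((1 / (n : ℝ)) * ∑ j, z j * c j)) with hφ
  have hφcont : Continuous φ := by
    apply Continuous.prodMk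
    · apply continuous_pi
      intro i
      exact (continuous_const.mul (continuous_finset_sum _ fun j _ =>
        continuous_const.mul (continuous_apply j))).sub continuous_const
    · exact (continuous_const.mul (continuous_finset_sum _ fun j _ =>
        (continuous_apply j).mul continuous_const)).neg
  set A : Set ((Fin p → ℝ) × ℝ) := φ '' K with hA
  set B : Set ((Fin p → ℝ) × ℝ) := {u | (∀ i, 0 ≤ u.1 i) ∧ W ≤ u.2} with hB
  have hAcomp : IsCompact A := hKcomp.image hφcont
  have hAconv : Convex ℝ A := by
    rintro _ ⟨z1, hz1, rfl⟩ _ ⟨z2, hz2, rfl⟩ a b' ha hb' hab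
    refine ⟨a • z1 + b' • z2, hKconv hz1 hz2 ha hb' hab, ?_⟩
    have hsum1 : ∀ i, ∑ j, F i j * (a • z1 + b' • z2) j
        = a * ∑ j, F i j * z1 j + b' * ∑ j, F i j * z2 j := by
      intro i
      rw [Finset.mul_sum, Finset.mul_sum, ← Finset.sum_add_distrib]
      refine Finset.sum_congr rfl fun j _ => ?_
      simp only [Pi.add_apply, Pi.smul_apply, smul_eq_mul]
      ring
    have hsum2 : ∑ j, (a • z1 + b' • z2) j * c j
        = a * ∑ j, z1 j * c j + b' * ∑ j, z2 j * c j := by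
      rw [Finset.mul_sum, Finset.mul_sum, ← Finset.sum_add_distrib]
      refine Finset.sum_congr rfl fun j _ => ?_
      simp only [Pi.add_apply, Pi.smul_apply, smul_eq_mul]
      ring
    apply Prod.ext
    · funext i
      show (1 / (n : ℝ)) * ∑ j, F i j * (a • z1 + b' • z2) j - b i
          = (a • φ z1 + b' • φ z2).1 i
      have h1 : (a • φ z1 + b' • φ z2).1 i
          = a * ((1 / (n : ℝ)) * ∑ j, F i j * z1 j - b i)
            + b' * ((1 / (n : ℝ)) * ∑ j, F i j * z2 j - b i) := rfl
      rw [h1, hsum1 i]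
      linear_combination (b i) * hab
    · show -((1 / (n : ℝ)) * ∑ j, (a • z1 + b' • z2) j * c j)
          = (a • φ z1 + b' • φ z2).2
      have h2 : (a • φ z1 + b' • φ z2).2
          = a * (-((1 / (n : ℝ)) * ∑ j, z1 j * c j))
            + b' * (-((1 / (n : ℝ)) * ∑ j, z2 j * c j)) := rfl
      rw [h2, hsum2]
      ring
  have hBconv : Convex ℝ B := by
    rintro u ⟨hu1, hu2⟩ v ⟨hv1, hv2⟩ a b' ha hb' hab
    constructor
    · intro i
      have h1 : (a • u + b' • v).1 i = a * u.1 i + b' * v.1 i := rfl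
      rw [h1]
      exact add_nonneg (mul_nonneg ha (hu1 i)) (mul_nonneg hb' (hv1 i))
    · have h2 : (a • u + b' • v).2 = a * u.2 + b' * v.2 := rfl
      rw [h2]
      have e1 : a * W + b' * W = W := by rw [← add_mul, hab, one_mul]
      have e2 : a * W ≤ a * u.2 := mul_le_mul_of_nonneg_left hu2 ha
      have e3 : b' * W ≤ b' * v.2 := mul_le_mul_of_nonneg_left hv2 hb'
      linarith
  have hBclosed : IsClosed B := by
    have : B = (⋂ i, {u : (Fin p → ℝ) × ℝ | 0 ≤ u.1 i}) ∩ {u | W ≤ u.2} := by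
      ext u
      simp only [hB, Set.mem_setOf_eq, Set.mem_inter_iff, Set.mem_iInter]
    rw [this]
    exact IsClosed.inter (isClosed_iInter fun i =>
        isClosed_le continuous_const ((continuous_apply i).comp continuous_fst))
      (isClosed_le continuous_const continuous_snd)
  have hdisj : Disjoint A B := by
    rw [Set.disjoint_left]
    rintro _ ⟨z, hzK, rfl⟩ ⟨hB1, hB2⟩
    have hzZ : z ∈ ZSet p n F b := by
      refine ⟨(hKmem z).mp hzK, fun i => ?_⟩
      have h1 : (0:ℝ) ≤ (φ z).1 i := hB1 i
      rw [hφ] at h1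
      dsimp only at h1
      linarith
    have h2 : W ≤ -((1 / (n : ℝ)) * ∑ j, z j * c j) := hB2
    have h3 := hcon z hzZ
    linarith
  obtain ⟨f, u, v, hfu, huv, hfv⟩ :=
    geometric_hahn_banach_compact_closed hAconv hAcomp hBconv hBclosed hdisj
  set σ' : Fin p → ℝ := fun i => f (Pi.single i 1, 0) with hσ'
  set s' : ℝ := f (0, 1) with hs'
  have hdec : ∀ (y : Fin p → ℝ) (t : ℝ), f (y, t) = (∑ i, y i * σ' i) + t * s' := by
    intro y t
    have h1 : ((y, t) : (Fin p → ℝ) × ℝ)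
        = (∑ i, ((Pi.single i (y i) : Fin p → ℝ), (0:ℝ))) + t • ((0 : Fin p → ℝ), (1:ℝ)) := by
      apply Prod.ext
      · rw [Prod.fst_add, Prod.fst_sum]
        have e1 : (t • ((0 : Fin p → ℝ), (1:ℝ))).1 = (0 : Fin p → ℝ) := by
          rw [Prod.smul_fst]; simp
        rw [e1, add_zero]
        exact (Finset.univ_sum_single y).symm
      · rw [Prod.snd_add, Prod.snd_sum]
        simp
    rw [h1, map_add, map_sum, map_smul]
    have h2 : ∀ i : Fin p, f ((Pi.single i (y i) : Fin p → ℝ), (0:ℝ)) = y i * σ' i := by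
      intro i
      have h3 : ((Pi.single i (y i) : Fin p → ℝ), (0:ℝ))
          = y i • ((Pi.single i 1 : Fin p → ℝ), (0:ℝ)) := by
        apply Prod.ext
        · rw [Prod.smul_fst, ← Pi.single_smul, smul_eq_mul, mul_one]
        · rw [Prod.smul_snd, smul_zero]
      rw [h3, map_smul, smul_eq_mul, hσ']
    rw [Finset.sum_congr rfl fun i _ => h2 i, smul_eq_mul, ← hs']
  have hWs : v < W * s' := by
    have h0B : (((0 : Fin p → ℝ)), W) ∈ B := ⟨fun i => le_refl 0, le_refl W⟩
    have h0 := hfv _ h0B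
    rw [hdec] at h0
    simpa using h0
  have hσnn : ∀ i, 0 ≤ σ' i := by
    intro i
    by_contra hneg
    push_neg at hneg
    have hden : (0:ℝ) < -σ' i := by linarith
    set t : ℝ := (W * s' - v) / (-σ' i) + 1 with ht
    have ht0 : 0 < (W * s' - v) / (-σ' i) := div_pos (by linarith [hWs]) hden
    have htnn : 0 ≤ t := by rw [ht]; linarith
    have hmem : ((Pi.single i t : Fin p → ℝ), W) ∈ B := by
      refine ⟨fun k => ?_, le_refl W⟩
      dsimp only
      rcases eq_or_ne k i with rfl | hne
      · rw [Pi.single_eq_same]; exact htnn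
      · rw [Pi.single_eq_of_ne hne]
    have hv := hfv _ hmem
    rw [hdec] at hv
    have hsum : ∑ k, (Pi.single i t : Fin p → ℝ) k * σ' k = t * σ' i := by
      rw [Finset.sum_eq_single i]
      · rw [Pi.single_eq_same]
      · intro k _ hk; rw [Pi.single_eq_of_ne hk, zero_mul]
      · intro hk; exact absurd (Finset.mem_univ i) hk
    rw [hsum] at hv
    have h4 : (W * s' - v) / (-σ' i) * σ' i = -(W * s' - v) := by
      have h5 : -σ' i ≠ 0 := ne_of_gt hden
      rw [div_neg, neg_mul, div_mul_cancel₀ _ (fun h => h5 (by rw [h, neg_zero]))]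
    have h6 : t * σ' i = -(W * s' - v) + σ' i := by rw [ht, add_mul, one_mul, h4]
    rw [h6] at hv
    linarith
  have hsnn : 0 ≤ s' := by
    by_contra hneg
    push_neg at hneg
    have hden : (0:ℝ) < -s' := by linarith
    set t : ℝ := (W * s' - v) / (-s') + 1 with ht
    have ht0 : 0 < (W * s' - v) / (-s') := div_pos (by linarith [hWs]) hden
    have htnn : 0 ≤ t := by rw [ht]; linarith
    have hmem : (((0 : Fin p → ℝ)), W + t) ∈ B := ⟨fun i => le_refl 0, by show W ≤ W + t; linarith⟩
    have hv := hfv _ hmem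
    rw [hdec] at hv
    simp only [Pi.zero_apply, zero_mul, Finset.sum_const_zero, zero_add] at hv
    have h4 : (W * s' - v) / (-s') * s' = -(W * s' - v) := by
      have h5 : -s' ≠ 0 := ne_of_gt hden
      rw [div_neg, neg_mul, div_mul_cancel₀ _ (fun h => h5 (by rw [h, neg_zero]))]
    have h6 : (W + t) * s' = W * s' + (-(W * s' - v) + s') := by
      rw [ht]
      rw [add_mul W (((W * s' - v) / (-s')) + 1) s', add_mul, one_mul, h4]
    rw [h6] at hv
    linarith
  rcases eq_or_lt_of_le hsnn with hs0 | hpos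
  · -- s' = 0 case
    have hz₀K : z₀ ∈ K := (hKmem z₀).mpr hz₀.1
    have hfu0 := hfu _ ⟨z₀, hz₀K, rfl⟩
    rw [hφ] at hfu0
    dsimp only at hfu0
    rw [hdec] at hfu0
    rw [← hs0, mul_zero, add_zero] at hfu0
    have h8 : 0 ≤ ∑ i, ((1/(n:ℝ)) * ∑ j, F i j * z₀ j - b i) * σ' i :=
      Finset.sum_nonneg fun i _ => mul_nonneg (by have := hz₀.2 i; linarith) (hσnn i)
    have h9 := hWs
    rw [← hs0, mul_zero] at h9
    linarith
  · -- s' > 0 case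
    set τ : Fin p → ℝ := fun i => σ' i / s' with hτdef
    have hτ : ∀ i, 0 ≤ τ i := fun i => div_nonneg (hσnn i) (le_of_lt hpos)
    have hh := h τ hτ
    set zh : Fin n → ℝ := fun j => if 0 ≤ (∑ i, τ i * F i j) - c j then (1:ℝ) else -1 with hzh
    have hzhK : zh ∈ K := by
      rw [hKmem]
      intro j
      rw [hzh]
      dsimp only
      split_ifs <;> constructor <;> norm_num
    have hfz := hfu _ ⟨zh, hzhK, rfl⟩
    rw [hφ] at hfz
    dsimp only at hfz
    rw [hdec] at hfz
    have hστ : ∀ i, σ' i = τ i * s' := by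
      intro i
      rw [hτdef]
      dsimp only
      rw [div_mul_cancel₀ _ (ne_of_gt hpos)]
    have h3 : ∑ j, zh j * (∑ i, τ i * F i j) - ∑ j, zh j * c j
        = ∑ j, |(∑ i, τ i * F i j) - c j| := by
      rw [← Finset.sum_sub_distrib]
      refine Finset.sum_congr rfl fun j _ => ?_
      rw [hzh]
      dsimp only
      split_ifs with hd
      · rw [abs_of_nonneg hd]; ring
      · rw [abs_of_neg (not_le.mp hd)]; ring
    have key : (∑ i, ((1/(n:ℝ)) * ∑ j, F i j * zh j - b i) * σ' i)
        + (-((1/(n:ℝ)) * ∑ j, zh j * c j)) * s'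
        = s' * (-(∑ i, b i * τ i) + (1/(n:ℝ)) * ∑ j, |(∑ i, τ i * F i j) - c j|) := by
      have h1 : ∀ i, ((1/(n:ℝ)) * ∑ j, F i j * zh j - b i) * σ' i
          = s' * ((1/(n:ℝ)) * (τ i * ∑ j, F i j * zh j) - b i * τ i) := by
        intro i; rw [hστ i]; ring
      rw [Finset.sum_congr rfl fun i _ => h1 i, ← Finset.mul_sum]
      have h2 : ∑ i, ((1/(n:ℝ)) * (τ i * ∑ j, F i j * zh j) - b i * τ i)
          = (1/(n:ℝ)) * ∑ j, zh j * (∑ i, τ i * F i j) - ∑ i, b i * τ i := by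
        rw [Finset.sum_sub_distrib]
        congr 1
        rw [← Finset.mul_sum, swap_sum p n F τ zh]
      rw [h2, ← h3]
      ring
    rw [key] at hfz
    have h5 : s' * (-(∑ i, b i * τ i) + (1/(n:ℝ)) * ∑ j, |(∑ i, τ i * F i j) - c j|)
        < s' * W := by
      have h7 := lt_trans (lt_trans hfz huv) hWs
      linarith [h7]
    have hD := lt_of_mul_lt_mul_left h5 hpos.le
    linarith [hh]

theorem stmt_8 (p n : ℕ) (hp : 0 < p) (hn : 0 < n)
    (F : Fin p → Fin n → ℝ) (hF : ∀ i j, F i j ∈ Set.Icc (-1:ℝ) 1) (b : Fin p → ℝ)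
    (lp lm lp' lm' lp'' lm'' Γinv : ℝ → ℝ)
    (hlpc : ContinuousOn lp (Set.Icc (-1) 1))
    (hlmc : ContinuousOn lm (Set.Icc (-1) 1))
    (hlpd : ∀ x ∈ Set.Ioo (-1:ℝ) 1, HasDerivAt lp (lp' x) x)
    (hlmd : ∀ x ∈ Set.Ioo (-1:ℝ) 1, HasDerivAt lm (lm' x) x)
    (hlpd2 : ∀ x ∈ Set.Ioo (-1:ℝ) 1, HasDerivAt lp' (lp'' x) x)
    (hlmd2 : ∀ x ∈ Set.Ioo (-1:ℝ) 1, HasDerivAt lm' (lm'' x) x)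
    (hlpm : AntitoneOn lp (Set.Icc (-1) 1))
    (hlmm : MonotoneOn lm (Set.Icc (-1) 1))
    (hslope : ∀ x ∈ Set.Ioo (-1:ℝ) 1, 0 < lm' x - lp' x)
    (hGinvMem : ∀ m ∈ Set.Icc (lm (-1) - lp (-1)) (lm 1 - lp 1), Γinv m ∈ Set.Icc (-1:ℝ) 1)
    (hGinvRight : ∀ m ∈ Set.Icc (lm (-1) - lp (-1)) (lm 1 - lp 1), lm (Γinv m) - lp (Γinv m) = m)
    (hGinvLeft : ∀ g ∈ Set.Icc (-1:ℝ) 1, Γinv (lm g - lp g) = g)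
    (hZ : (ZSet p n F b).Nonempty)
    (σs : Fin p → ℝ) (hσs : ∀ i, 0 ≤ σs i)
    (hmin : ∀ σ : Fin p → ℝ, (∀ i, 0 ≤ σ i) →
      slack lp lm Γinv p n F b σs ≤ slack lp lm Γinv p n F b σ) :
    sSup {w : ℝ | ∃ z ∈ ZSet p n F b, w = lossV lp lm n z (gpred lp lm Γinv p n F σs)} =
      (1 / 2) * slack lp lm Γinv p n F b σs ∧
    (1 / 2) * slack lp lm Γinv p n F b σs =
      sInf {v : ℝ | ∃ g : Fin n → ℝ, (∀ j, g j ∈ Set.Icc (-1:ℝ) 1) ∧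
        v = sSup {w : ℝ | ∃ z ∈ ZSet p n F b, w = lossV lp lm n z g}} := by
  classical
  -- membership of the predictor in the cube
  have hgsmem : ∀ j, gpred lp lm Γinv p n F σs j ∈ Set.Icc (-1:ℝ) 1 := by
    intro j
    unfold gpred
    split_ifs with h1 h2
    · constructor <;> norm_num
    · exact hGinvMem _ ⟨le_of_lt (not_le.mp h1), le_of_lt h2⟩
    · constructor <;> norm_num
  -- key lower bound: for every g there is z ∈ Z with (1/2)γ(σs) ≤ loss
  have keyLB : ∀ g : Fin n → ℝ, (∀ j, g j ∈ Set.Icc (-1:ℝ) 1) →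
      ∃ z ∈ ZSet p n F b, (1/2) * slack lp lm Γinv p n F b σs ≤ lossV lp lm n z g := by
    intro g hg
    have hprem : ∀ τ : Fin p → ℝ, (∀ i, 0 ≤ τ i) →
        slack lp lm Γinv p n F b σs - (1/(n:ℝ)) * ∑ j, (lp (g j) + lm (g j))
          ≤ -(∑ i, b i * τ i)
            + (1/(n:ℝ)) * ∑ j, |(∑ i, τ i * F i j) - (lm (g j) - lp (g j))| := by
      intro τ hτ
      have hstar : ∀ j, Psi lp lm Γinv (∑ i, τ i * F i j) - (lp (g j) + lm (g j))
          ≤ |(∑ i, τ i * F i j) - (lm (g j) - lp (g j))| := by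
        intro j
        have := star_ineq lp lm Γinv hlpm hlmm hGinvMem hGinvRight hGinvLeft
          (g j) (hg j) (∑ i, τ i * F i j)
        linarith
      have hsum : ∑ j, Psi lp lm Γinv (∑ i, τ i * F i j) - ∑ j, (lp (g j) + lm (g j))
          ≤ ∑ j, |(∑ i, τ i * F i j) - (lm (g j) - lp (g j))| := by
        rw [← Finset.sum_sub_distrib]
        exact Finset.sum_le_sum fun j _ => hstar j
      have hmul := mul_le_mul_of_nonneg_left hsum (by positivity : (0:ℝ) ≤ 1/(n:ℝ))
      rw [mul_sub] at hmul
      have hsl := hmin τ hτ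
      unfold slack at hsl
      unfold slack
      linarith [hsl, hmul]
    obtain ⟨z, hzZ, hzW⟩ := dualityLemma p n F b hZ (fun j => lm (g j) - lp (g j))
      (slack lp lm Γinv p n F b σs - (1/(n:ℝ)) * ∑ j, (lp (g j) + lm (g j))) hprem
    refine ⟨z, hzZ, ?_⟩
    have hloss : lossV lp lm n z g
        = ((1/(n:ℝ)) * ∑ j, (lp (g j) + lm (g j))
          + (-((1/(n:ℝ)) * ∑ j, z j * (lm (g j) - lp (g j)))))/2 := by
      unfold lossV
      have he : ∀ j : Fin n, (1 + z j)/2 * lp (g j) + (1 - z j)/2 * lm (g j)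
          = ((lp (g j) + lm (g j)) - z j * (lm (g j) - lp (g j)))/2 := fun j => by ring
      rw [Finset.sum_congr rfl fun j _ => he j, ← Finset.sum_div, Finset.sum_sub_distrib]
      ring
    rw [hloss]
    linarith [hzW]
  -- key upper bound at the minimax predictor
  have keyUB : ∀ z ∈ ZSet p n F b,
      lossV lp lm n z (gpred lp lm Γinv p n F σs) ≤ (1/2) * slack lp lm Γinv p n F b σs := by
    intro z hz
    have hpt : ∀ j, (1 + z j)/2 * lp (gpred lp lm Γinv p n F σs j)
          + (1 - z j)/2 * lm (gpred lp lm Γinv p n F σs j)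
        ≤ (Psi lp lm Γinv (∑ i, σs i * F i j) - z j * (∑ i, σs i * F i j))/2 := by
      intro j
      refine ptUB lp lm Γinv hGinvRight (z j) (∑ i, σs i * F i j)
        (hz.1 j).1 (hz.1 j).2 (gpred lp lm Γinv p n F σs j) ?_
      rfl
    have hsumle : ∑ j, ((1 + z j)/2 * lp (gpred lp lm Γinv p n F σs j)
          + (1 - z j)/2 * lm (gpred lp lm Γinv p n F σs j))
        ≤ ∑ j, (Psi lp lm Γinv (∑ i, σs i * F i j) - z j * (∑ i, σs i * F i j))/2 :=
      Finset.sum_le_sum fun j _ => hpt j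
    have hswap : ∑ j, z j * (∑ i, σs i * F i j) = ∑ i, σs i * ∑ j, F i j * z j :=
      (swap_sum p n F σs z).symm
    have hfeas : ∑ i, b i * σs i ≤ (1/(n:ℝ)) * ∑ j, z j * (∑ i, σs i * F i j) := by
      rw [hswap, Finset.mul_sum]
      refine Finset.sum_le_sum fun i _ => ?_
      have h1 := hz.2 i
      have h2 := mul_le_mul_of_nonneg_left h1 (hσs i)
      calc b i * σs i = σs i * b i := by ring
        _ ≤ σs i * ((1/(n:ℝ)) * ∑ j, F i j * z j) := h2
        _ = (1/(n:ℝ)) * (σs i * ∑ j, F i j * z j) := by ring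
    have hmul := mul_le_mul_of_nonneg_left hsumle (show (0:ℝ) ≤ 1/(n:ℝ) by positivity)
    have hexp : (1/(n:ℝ)) * ∑ j, (Psi lp lm Γinv (∑ i, σs i * F i j)
          - z j * (∑ i, σs i * F i j))/2
        = ((1/(n:ℝ)) * ∑ j, Psi lp lm Γinv (∑ i, σs i * F i j)
           - (1/(n:ℝ)) * ∑ j, z j * (∑ i, σs i * F i j))/2 := by
      rw [← Finset.sum_div, Finset.sum_sub_distrib]
      ring
    rw [hexp] at hmul
    unfold lossV slack
    linarith [hmul, hfeas]
  obtain ⟨z₀, hz₀⟩ := hZ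
  have hS1ne : {w : ℝ | ∃ z ∈ ZSet p n F b,
      w = lossV lp lm n z (gpred lp lm Γinv p n F σs)}.Nonempty :=
    ⟨lossV lp lm n z₀ (gpred lp lm Γinv p n F σs), z₀, hz₀, rfl⟩
  have hS1ub : ∀ w ∈ {w : ℝ | ∃ z ∈ ZSet p n F b,
      w = lossV lp lm n z (gpred lp lm Γinv p n F σs)},
      w ≤ (1/2) * slack lp lm Γinv p n F b σs := by
    rintro w ⟨z, hz, rfl⟩
    exact keyUB z hz
  obtain ⟨z₁, hz₁Z, hz₁⟩ := keyLB (gpred lp lm Γinv p n F σs) hgsmem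
  have claim1 : sSup {w : ℝ | ∃ z ∈ ZSet p n F b,
      w = lossV lp lm n z (gpred lp lm Γinv p n F σs)}
      = (1/2) * slack lp lm Γinv p n F b σs := by
    apply le_antisymm
    · exact csSup_le hS1ne hS1ub
    · exact le_trans hz₁ (le_csSup ⟨(1/2) * slack lp lm Γinv p n F b σs, hS1ub⟩
        ⟨z₁, hz₁Z, rfl⟩)
  refine ⟨claim1, ?_⟩
  have hmemT : (1/2) * slack lp lm Γinv p n F b σs ∈ {v : ℝ | ∃ g : Fin n → ℝ,
      (∀ j, g j ∈ Set.Icc (-1:ℝ) 1) ∧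
      v = sSup {w : ℝ | ∃ z ∈ ZSet p n F b, w = lossV lp lm n z g}} :=
    ⟨gpred lp lm Γinv p n F σs, hgsmem, claim1.symm⟩
  have hlbT : ∀ v ∈ {v : ℝ | ∃ g : Fin n → ℝ, (∀ j, g j ∈ Set.Icc (-1:ℝ) 1) ∧
      v = sSup {w : ℝ | ∃ z ∈ ZSet p n F b, w = lossV lp lm n z g}},
      (1/2) * slack lp lm Γinv p n F b σs ≤ v := by
    rintro v ⟨g, hg, rfl⟩
    obtain ⟨z, hzZ, hzle⟩ := keyLB g hg
    have hbdd : BddAbove {w : ℝ | ∃ z ∈ ZSet p n F b, w = lossV lp lm n z g} := by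
      refine ⟨(1/(n:ℝ)) * ∑ j, (|lp (g j)| + |lm (g j)|), ?_⟩
      rintro w ⟨z', hz', rfl⟩
      unfold lossV
      refine mul_le_mul_of_nonneg_left (Finset.sum_le_sum fun j _ => ?_) (by positivity)
      have h1 := (hz'.1 j).1
      have h2 := (hz'.1 j).2
      nlinarith [le_abs_self (lp (g j)), le_abs_self (lm (g j)),
        abs_nonneg (lp (g j)), abs_nonneg (lm (g j)),
        mul_nonneg (by linarith : (0:ℝ) ≤ (1 + z' j)/2)
          (by linarith [le_abs_self (lp (g j))] : (0:ℝ) ≤ |lp (g j)| - lp (g j)),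
        mul_nonneg (by linarith : (0:ℝ) ≤ (1 - z' j)/2)
          (by linarith [le_abs_self (lm (g j))] : (0:ℝ) ≤ |lm (g j)| - lm (g j)),
        mul_nonneg (by linarith : (0:ℝ) ≤ (1 - z' j)/2) (abs_nonneg (lp (g j))),
        mul_nonneg (by linarith : (0:ℝ) ≤ (1 + z' j)/2) (abs_nonneg (lm (g j)))]
    exact le_trans hzle (le_csSup hbdd ⟨z, hzZ, rfl⟩)
  exact le_antisymm
    (le_csInf ⟨_, hmemT⟩ hlbT)
    (csInf_le ⟨(1/2) * slack lp lm Γinv p n F b σs, fun v hv => hlbT v hv⟩ hmemT)
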